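/- For all α, β ∈ (0,1] and a ∈ ℝ, the class of functions possessing a conformable derivative of order α at every point of (a,∞) coincides with the class of functions possessing a conformable derivative of order β at every point of (a,∞); both coincide with the class of functions differentiable on (a,∞). -/
import Mathlib


open Filter Set Real

/-- `f` has (two-sided) left-sided conformable derivative of order `α`
with lower terminal `a` at the point `t`, with value `L`. -/
def HasConfDerivAt (a α : ℝ) (f : ℝ → ℝ) (t L : ℝ) : Prop :=
  Filter.Tendsto (fun θ : ℝ => (f (t + θ * (t - a) ^ (1 - α)) - f t) / θ)
    (nhdsWithin 0 {0}ᶜ) (nhds L)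

lemma key (f : ℝ → ℝ) (t c : ℝ) (hc : c ≠ 0) :
    (∃ L : ℝ, Filter.Tendsto (fun θ : ℝ => (f (t + θ * c) - f t) / θ)
      (nhdsWithin 0 {0}ᶜ) (nhds L)) ↔ DifferentiableAt ℝ f t := by
  constructor
  · rintro ⟨L, hL⟩
    have hm : Filter.Tendsto (fun y : ℝ => (y - t) / c) (nhdsWithin t {t}ᶜ)
        (nhdsWithin 0 {0}ᶜ) := by
      rw [tendsto_nhdsWithin_iff]
      constructor
      · have : Filter.Tendsto (fun y : ℝ => (y - t) / c) (nhds t) (nhds ((t - t) / c)) := by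
          exact ((continuous_id.sub continuous_const).div_const c).tendsto t
        simpa using this.mono_left nhdsWithin_le_nhds
      · filter_upwards [self_mem_nhdsWithin] with y hy
        simp only [mem_compl_iff, mem_singleton_iff] at hy ⊢
        exact div_ne_zero (sub_ne_zero.mpr hy) hc
    have hcomp : Filter.Tendsto (fun y : ℝ =>
        (f (t + (y - t) / c * c) - f t) / ((y - t) / c) / c)
        (nhdsWithin t {t}ᶜ) (nhds (L / c)) := (hL.comp hm).div_const c
    have heq : ∀ y : ℝ, (f (t + (y - t) / c * c) - f t) / ((y - t) / c) / c
        = slope f t y := by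
      intro y
      rw [div_mul_cancel₀ _ hc, div_div, div_mul_cancel₀ _ hc, slope_def_field,
        add_sub_cancel]
    have : HasDerivAt f (L / c) t := by
      rw [hasDerivAt_iff_tendsto_slope]
      exact hcomp.congr heq
    exact this.differentiableAt
  · intro hf
    have hL := hf.hasDerivAt
    set L := deriv f t
    rw [hasDerivAt_iff_tendsto_slope] at hL
    refine ⟨L * c, ?_⟩
    have hm : Filter.Tendsto (fun θ : ℝ => t + θ * c) (nhdsWithin 0 {0}ᶜ)
        (nhdsWithin t {t}ᶜ) := by
      rw [tendsto_nhdsWithin_iff]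
      constructor
      · have : Filter.Tendsto (fun θ : ℝ => t + θ * c) (nhds 0) (nhds (t + 0 * c)) := by
          exact (continuous_const.add (continuous_id.mul continuous_const)).tendsto 0
        simpa using this.mono_left nhdsWithin_le_nhds
      · filter_upwards [self_mem_nhdsWithin] with θ hθ
        simp only [mem_compl_iff, mem_singleton_iff] at hθ ⊢
        intro h
        apply hθ
        have h' : θ * c = 0 := by linarith
        rcases mul_eq_zero.mp h' with h'' | h''
        · exact h''
        · exact absurd h'' hc
    have hcomp : Filter.Tendsto (fun θ : ℝ => slope f t (t + θ * c) * c)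
        (nhdsWithin 0 {0}ᶜ) (nhds (L * c)) := ((hL.comp hm).mul_const c)
    refine hcomp.congr' ?_
    filter_upwards [self_mem_nhdsWithin] with θ hθ
    simp only [mem_compl_iff, mem_singleton_iff] at hθ
    rw [slope_def_field]
    field_simp
    ring

theorem stmt14 (a α β : ℝ) (hα : 0 < α) (hα1 : α ≤ 1) (hβ : 0 < β) (hβ1 : β ≤ 1) :
    {f : ℝ → ℝ | ∀ t : ℝ, a < t → ∃ L : ℝ, HasConfDerivAt a α f t L} =
      {f : ℝ → ℝ | ∀ t : ℝ, a < t → ∃ L : ℝ, HasConfDerivAt a β f t L} ∧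
    {f : ℝ → ℝ | ∀ t : ℝ, a < t → ∃ L : ℝ, HasConfDerivAt a α f t L} =
      {f : ℝ → ℝ | ∀ t : ℝ, a < t → DifferentiableAt ℝ f t} := by
  have main : ∀ γ : ℝ, {f : ℝ → ℝ | ∀ t : ℝ, a < t → ∃ L : ℝ, HasConfDerivAt a γ f t L} =
      {f : ℝ → ℝ | ∀ t : ℝ, a < t → DifferentiableAt ℝ f t} := by
    intro γ
    ext f
    simp only [mem_setOf_eq]
    refine forall_congr' fun t => forall_congr' fun ht => ?_
    exact key f t ((t - a) ^ (1 - γ)) (ne_of_gt (Real.rpow_pos_of_pos (sub_pos.mpr ht) _))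
  exact ⟨(main α).trans (main β).symm, main α⟩
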